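/- For every integer k ≥ 2, the definite-integral identity ∫_{−1}^{1} G_k(x)/(x²+1) dx = b_{k−2}/2 − π a_k/4 holds, where G_k(x) := 2^{−k} Σ_{j=0}^{⌊(k−1)/2⌋} C(k,j) x^{k−2j}, a_k := 2^{−k} C(k,k/2) for even k and 0 for odd k, and b_m := ∫_{−1}^{1} G_{m+1}(x)/x dx (a well-defined integral of a polynomial, since G_{m+1}(x)/x is a polynomial for even m and the integral is 0 for odd m). -/

import Mathlib

/-- `a n = binomial(n, n/2)/2^n` for even `n`, and `0` for odd `n`, as a real number. -/
noncomputable def a (n : ℕ) : ℝ := if Even n then (n.choose (n / 2) : ℝ) / 2 ^ n else 0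

/-- `G 0 = 0` and `G n x = 2^{-n} Σ_{j=0}^{⌊(n-1)/2⌋} C(n,j) x^{n-2j}` for `n ≥ 1`. -/
noncomputable def G (n : ℕ) (x : ℝ) : ℝ :=
  if n = 0 then 0 else
    (1 / 2 ^ n) * ∑ j ∈ Finset.range ((n - 1) / 2 + 1), (n.choose j : ℝ) * x ^ (n - 2 * j)

/-- `b m = ∫_{-1}^1 G_{m+1}(x)/x dx`. -/
noncomputable def b (m : ℕ) : ℝ := ∫ x in (-1 : ℝ)..1, G (m + 1) x / x

lemma sumL (x : ℝ) (n m : ℕ) (h : 2*m ≤ n) :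
    (x^2+1) * ∑ j ∈ Finset.range (m+1), (n.choose j : ℝ) * x^(n-2*j)
    = (∑ j ∈ Finset.range (m+1), ((n+1).choose j : ℝ) * x^(n+2-2*j))
      + (n.choose m : ℝ) * x^(n-2*m) := by
  induction m with
  | zero =>
      norm_num [Finset.sum_range_one]
      have : x^(n+2) = x^2 * x^n := by rw [pow_add]; ring
      rw [this]; ring
  | succ m ih =>
      have h' : 2*m ≤ n := by omega
      rw [Finset.sum_range_succ (fun j => (n.choose j : ℝ) * x^(n-2*j)) (m+1),
        Finset.sum_range_succ (fun j => ((n+1).choose j : ℝ) * x^(n+2-2*j)) (m+1),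
        mul_add, ih h']
      have e1 : x^2 * x^(n-2*(m+1)) = x^(n-2*m) := by
        rw [← pow_add]; congr 1; omega
      have e2 : n+2-2*(m+1) = n - 2*m := by omega
      have e3 : (((n+1).choose (m+1)) : ℝ) = (n.choose m : ℝ) + (n.choose (m+1) : ℝ) := by
        norm_cast
      rw [e2, e3]
      have : (x^2+1) * ((n.choose (m+1) : ℝ) * x^(n-2*(m+1)))
          = (n.choose (m+1) : ℝ) * (x^2 * x^(n-2*(m+1))) + (n.choose (m+1) : ℝ) * x^(n-2*(m+1)) := by
        ring
      rw [this, e1]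
      ring

lemma key_even (s : ℕ) (x : ℝ) :
    (x^2+1) * G (2*s+1) x = 2*x*G (2*s+2) x + a (2*s+2) * x := by
  have h2 : Even (2*s+2) := ⟨s+1, by ring⟩
  simp only [G, a, if_pos h2, if_neg (by omega : ¬ 2*s+1 = 0), if_neg (by omega : ¬ 2*s+2 = 0)]
  have r1 : (2*s+1-1)/2 = s := by omega
  have r2 : (2*s+2-1)/2 = s := by omega
  have r3 : (2*s+2)/2 = s+1 := by omega
  rw [r1, r2, r3]
  have hs := sumL x (2*s+1) s (by omega)
  have e : x * ∑ j ∈ Finset.range (s+1), ((2*s+2).choose j : ℝ) * x^(2*s+2-2*j)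
      = ∑ j ∈ Finset.range (s+1), ((2*s+1+1).choose j : ℝ) * x^(2*s+1+2-2*j) := by
    rw [Finset.mul_sum]
    refine Finset.sum_congr rfl fun j hj => ?_
    simp only [Finset.mem_range] at hj
    have h1 : 2*s+1+2-2*j = (2*s+2-2*j)+1 := by omega
    have h2 : (2*s+1+1) = 2*s+2 := by omega
    rw [h1, h2, pow_succ]; ring
  have echoose : ((2*s+2).choose (s+1) : ℝ) = 2 * ((2*s+1).choose s : ℝ) := by
    have p1 : (2*s+2).choose (s+1) = (2*s+1).choose s + (2*s+1).choose (s+1) :=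
      Nat.choose_succ_succ (2*s+1) s
    have p2 : (2*s+1).choose (s+1) = (2*s+1).choose s := by
      have := Nat.choose_symm (n := 2*s+1) (k := s+1) (by omega)
      rw [show 2*s+1-(s+1) = s by omega] at this
      exact this.symm
    rw [p1, p2]; push_cast; ring
  have epow : (2:ℝ)^(2*s+2) = 2^(2*s+1) * 2 := by rw [pow_succ]
  have e1 : 2*s+1-2*s = 1 := by omega
  calc (x^2+1) * (1/2^(2*s+1) * ∑ j ∈ Finset.range (s+1), ((2*s+1).choose j : ℝ) * x^(2*s+1-2*j))
      = (1/2^(2*s+1)) * ((x^2+1) * ∑ j ∈ Finset.range (s+1), ((2*s+1).choose j : ℝ) * x^(2*s+1-2*j)) := by ring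
    _ = (1/2^(2*s+1)) * ((x * ∑ j ∈ Finset.range (s+1), ((2*s+2).choose j : ℝ) * x^(2*s+2-2*j))
          + ((2*s+1).choose s : ℝ) * x) := by rw [hs, ← e, e1, pow_one]
    _ = 2*x*(1/2^(2*s+2) * ∑ j ∈ Finset.range (s+1), ((2*s+2).choose j : ℝ) * x^(2*s+2-2*j))
          + ((2*s+2).choose (s+1) : ℝ)/2^(2*s+2) * x := by
        rw [echoose, epow]; ring

lemma key_odd (s : ℕ) (x : ℝ) :
    (x^2+1) * G (2*s+2) x = 2*x*G (2*s+3) x - a (2*s+2) * x^2 := by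
  have h2 : Even (2*s+2) := ⟨s+1, by ring⟩
  simp only [G, a, if_pos h2, if_neg (by omega : ¬ 2*s+2 = 0), if_neg (by omega : ¬ 2*s+3 = 0)]
  have r1 : (2*s+2-1)/2 = s := by omega
  have r2 : (2*s+3-1)/2 = s+1 := by omega
  have r3 : (2*s+2)/2 = s+1 := by omega
  rw [r1, r2, r3]
  have hs := sumL x (2*s+2) s (by omega)
  have e : x * ∑ j ∈ Finset.range (s+2), ((2*s+3).choose j : ℝ) * x^(2*s+3-2*j)
      = (∑ j ∈ Finset.range (s+1), ((2*s+2+1).choose j : ℝ) * x^(2*s+2+2-2*j))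
        + ((2*s+3).choose (s+1) : ℝ) * x^2 := by
    rw [Finset.sum_range_succ, mul_add, Finset.mul_sum]
    congr 1
    · refine Finset.sum_congr rfl fun j hj => ?_
      simp only [Finset.mem_range] at hj
      have h1 : 2*s+2+2-2*j = (2*s+3-2*j)+1 := by omega
      have h3 : (2*s+2+1) = 2*s+3 := by omega
      rw [h1, h3, pow_succ]; ring
    · rw [show 2*s+3-2*(s+1) = 1 by omega, pow_one]; ring
  have e' : (∑ j ∈ Finset.range (s+1), ((2*s+2+1).choose j : ℝ) * x^(2*s+2+2-2*j))
      = x * (∑ j ∈ Finset.range (s+2), ((2*s+3).choose j : ℝ) * x^(2*s+3-2*j))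
        - ((2*s+3).choose (s+1) : ℝ) * x^2 := by
    rw [e]; ring
  have echoose : ((2*s+3).choose (s+1) : ℝ)
      = ((2*s+2).choose s : ℝ) + ((2*s+2).choose (s+1) : ℝ) := by
    have p1 : (2*s+3).choose (s+1) = (2*s+2).choose s + (2*s+2).choose (s+1) :=
      Nat.choose_succ_succ (2*s+2) s
    rw [p1]; push_cast; ring
  have epow : (2:ℝ)^(2*s+3) = 2^(2*s+2) * 2 := by rw [pow_succ]
  have e1 : 2*s+2-2*s = 2 := by omega
  calc (x^2+1) * (1/2^(2*s+2) * ∑ j ∈ Finset.range (s+1), ((2*s+2).choose j : ℝ) * x^(2*s+2-2*j))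
      = (1/2^(2*s+2)) * ((x^2+1) * ∑ j ∈ Finset.range (s+1), ((2*s+2).choose j : ℝ) * x^(2*s+2-2*j)) := by ring
    _ = (1/2^(2*s+2)) * ((x * (∑ j ∈ Finset.range (s+2), ((2*s+3).choose j : ℝ) * x^(2*s+3-2*j))
          - ((2*s+3).choose (s+1) : ℝ) * x^2) + ((2*s+2).choose s : ℝ) * x^2) := by
        rw [hs, e', e1]
    _ = 2*x*(1/2^(2*s+3) * ∑ j ∈ Finset.range (s+2), ((2*s+3).choose j : ℝ) * x^(2*s+3-2*j))
          - ((2*s+2).choose (s+1) : ℝ)/2^(2*s+2) * x^2 := by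
        rw [echoose, epow]; ring

lemma key (k : ℕ) (hk : 2 ≤ k) (x : ℝ) :
    (x^2+1) * G (k-1) x = 2*x*G k x + a k * x - a (k-1) * x^2 := by
  rcases Nat.even_or_odd k with he | ho
  · rw [Nat.even_iff] at he
    obtain ⟨s, rfl⟩ : ∃ s, k = 2*s+2 := ⟨k/2-1, by omega⟩
    rw [show 2*s+2-1 = 2*s+1 by omega]
    have hodd : ¬ Even (2*s+1) := by rw [Nat.even_iff]; omega
    have ha : a (2*s+1) = 0 := by simp [a, hodd]
    rw [ha, key_even]; ring
  · rw [Nat.odd_iff] at ho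
    obtain ⟨s, rfl⟩ : ∃ s, k = 2*s+3 := ⟨(k-3)/2, by omega⟩
    rw [show 2*s+3-1 = 2*s+2 by omega]
    have hodd : ¬ Even (2*s+3) := by rw [Nat.even_iff]; omega
    have ha : a (2*s+3) = 0 := by simp [a, hodd]
    rw [ha, key_odd]; ring

lemma integral_x_div : (∫ x in (-1:ℝ)..1, x/(x^2+1)) = 0 := by
  have h := intervalIntegral.integral_comp_neg (a := (-1:ℝ)) (b := 1) (fun x : ℝ => x/(x^2+1))
  simp only [neg_neg] at h
  have e : ∀ x : ℝ, (-x)/((-x)^2+1) = -(x/(x^2+1)) := fun x => by rw [neg_sq]; ring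
  simp only [e, intervalIntegral.integral_neg] at h
  linarith

theorem stmt_13 (k : ℕ) (hk : 2 ≤ k) :
    (∫ x in (-1 : ℝ)..1, G k x / (x ^ 2 + 1)) = b (k - 2) / 2 - Real.pi * a k / 4 := by
  have hk1 : ¬ (k - 1 = 0) := by omega
  -- the polynomial equal to G (k-1) x / x away from 0
  set Pf : ℝ → ℝ := fun x =>
    (1 / 2 ^ (k-1)) * ∑ j ∈ Finset.range ((k-1-1)/2+1), ((k-1).choose j : ℝ) * x ^ (k-1-2*j-1)
    with hPf
  have hPcont : Continuous Pf := by
    apply continuous_const.mul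
    exact continuous_finset_sum _ fun j _ => continuous_const.mul (continuous_pow _)
  have hGdiv : ∀ x : ℝ, x ≠ 0 → G (k-1) x / x = Pf x := by
    intro x hx
    simp only [G, if_neg hk1, hPf]
    rw [mul_div_assoc, Finset.sum_div]
    congr 1
    refine Finset.sum_congr rfl fun j hj => ?_
    simp only [Finset.mem_range] at hj
    have he : k-1-2*j = (k-1-2*j-1)+1 := by omega
    rw [mul_div_assoc, he, pow_succ, mul_div_assoc, div_self hx, mul_one, Nat.add_sub_cancel]
  have hae : (fun x : ℝ => G (k-1) x / x) =ᵐ[MeasureTheory.volume] Pf := by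
    refine MeasureTheory.ae_iff.mpr (MeasureTheory.measure_mono_null ?_
      (MeasureTheory.measure_singleton (0:ℝ)))
    intro x hx
    simp only [Set.mem_setOf_eq] at hx
    simp only [Set.mem_singleton_iff]
    by_contra h0
    exact hx (hGdiv x h0)
  have hint1 : IntervalIntegrable (fun x : ℝ => G (k-1) x / x) MeasureTheory.volume (-1) 1 := by
    have hP := hPcont.intervalIntegrable (μ := MeasureTheory.volume) (-1) 1
    rw [intervalIntegrable_iff] at hP ⊢
    exact hP.congr (MeasureTheory.ae_restrict_of_ae hae.symm)
  have key' : ∀ x : ℝ, x ≠ 0 → G k x / (x^2+1)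
      = G (k-1) x / x / 2 - a k / 2 * (1+x^2)⁻¹ + a (k-1) / 2 * (x/(x^2+1)) := by
    intro x hx
    have h1 : (x:ℝ)^2+1 ≠ 0 := by positivity
    have h1' : (1:ℝ)+x^2 ≠ 0 := by positivity
    have hkey := key k hk x
    have h2x : (2:ℝ)*x ≠ 0 := mul_ne_zero two_ne_zero hx
    have hkey' : 2*x*G k x = (x^2+1) * G (k-1) x - a k * x + a (k-1) * x^2 := by linarith
    calc G k x / (x^2+1) = (2*x*(G k x)) / (2*x*(x^2+1)) := (mul_div_mul_left _ _ h2x).symm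
      _ = ((x^2+1) * G (k-1) x - a k * x + a (k-1) * x^2) / (2*x*(x^2+1)) := by rw [hkey']
      _ = G (k-1) x / x / 2 - a k / 2 * (1+x^2)⁻¹ + a (k-1) / 2 * (x/(x^2+1)) := by
          field_simp
          ring
  have hcong : (∫ x in (-1:ℝ)..1, G k x/(x^2+1))
      = ∫ x in (-1:ℝ)..1,
          (G (k-1) x / x / 2 - a k / 2 * (1+x^2)⁻¹ + a (k-1) / 2 * (x/(x^2+1))) := by
    apply intervalIntegral.integral_congr_ae
    have h0 : ∀ᵐ x ∂MeasureTheory.volume, G k x/(x^2+1)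
        = G (k-1) x / x / 2 - a k / 2 * (1+x^2)⁻¹ + a (k-1) / 2 * (x/(x^2+1)) := by
      refine MeasureTheory.ae_iff.mpr (MeasureTheory.measure_mono_null ?_
        (MeasureTheory.measure_singleton (0:ℝ)))
      intro x hx
      simp only [Set.mem_setOf_eq] at hx
      simp only [Set.mem_singleton_iff]
      by_contra h0
      exact hx (key' x h0)
    exact h0.mono fun x hx _ => hx
  have c2 : Continuous fun x : ℝ => (1+x^2)⁻¹ :=
    (continuous_const.add (continuous_pow 2)).inv₀ fun x => (by positivity : (1:ℝ) + x^2 ≠ 0)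
  have c3 : Continuous fun x : ℝ => x/(x^2+1) :=
    continuous_id.div ((continuous_pow 2).add continuous_const) fun x => by positivity
  have hA : IntervalIntegrable (fun x : ℝ => G (k-1) x / x / 2) MeasureTheory.volume (-1) 1 :=
    hint1.div_const 2
  have hB := (c2.intervalIntegrable (μ := MeasureTheory.volume) (-1) 1).const_mul (a k / 2)
  have hC := (c3.intervalIntegrable (μ := MeasureTheory.volume) (-1) 1).const_mul (a (k-1) / 2)
  rw [hcong, intervalIntegral.integral_add (hA.sub hB) hC, intervalIntegral.integral_sub hA hB,
    intervalIntegral.integral_div, intervalIntegral.integral_const_mul,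
    intervalIntegral.integral_const_mul, integral_inv_one_add_sq, integral_x_div]
  have hb : (∫ x in (-1:ℝ)..1, G (k-1) x / x) = b (k-2) := by
    rw [b, show k-2+1 = k-1 by omega]
  rw [hb, Real.arctan_one, Real.arctan_neg, Real.arctan_one]
  ring
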